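/- Let p ∈ [1,∞), let A ∈ ℝ^{n×d} have full column rank, and let S ∈ ℝ^{s×n} satisfy σ_S‖Ax‖_p ≤ ‖SAx‖_p ≤ κ_S σ_S‖Ax‖_p for all x ∈ ℝ^d, where σ_S > 0 and κ_S ≥ 1. Let SA = QR be a QR factorization with Q ∈ ℝ^{s×d} having orthonormal columns and R ∈ ℝ^{d×d} invertible. Then the matrix U = AR⁻¹ is (α,β,p)-conditioned for some α,β with αβ ≤ κ_S · d^{max(1/2, 1/p)} · s^{|1/p − 1/2|}. -/

import Mathlib

open Matrix Finset

/-- The entrywise `ℓ_p` norm of a vector: `‖v‖_p = (∑ i, |v i|^p)^(1/p)`. -/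
noncomputable def vecLpNorm (p : ℝ) {m : ℕ} (v : Fin m → ℝ) : ℝ :=
  (∑ i, |v i| ^ p) ^ (1 / p)

/-- The norm dual to the `ℓ_p` norm, i.e. the `ℓ_q` norm with `1/p + 1/q = 1`
(the `ℓ_∞` norm when `p = 1`). -/
noncomputable def vecDualNorm (p : ℝ) {m : ℕ} (v : Fin m → ℝ) : ℝ :=
  if p = 1 then ⨆ i, |v i| else vecLpNorm (p / (p - 1)) v

/-- The entrywise `ℓ_p` norm of a matrix: `|M|_p = (∑ i j, |M i j|^p)^(1/p)`. -/
noncomputable def matEntryLpNorm (p : ℝ) {m k : ℕ} (M : Matrix (Fin m) (Fin k) ℝ) : ℝ :=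
  (∑ i, ∑ j, |M i j| ^ p) ^ (1 / p)

/-- `U` is `(α, β, p)`-conditioned if `|U|_p ≤ α` and `‖x‖_q ≤ β ‖U x‖_p` for all `x`,
where `q` is the conjugate exponent of `p` (the constant `β` being nonnegative). -/
def IsConditioned (p : ℝ) {m k : ℕ} (α β : ℝ) (U : Matrix (Fin m) (Fin k) ℝ) : Prop :=
  0 ≤ β ∧ matEntryLpNorm p U ≤ α ∧
    ∀ x : Fin k → ℝ, vecDualNorm p x ≤ β * vecLpNorm p (U *ᵥ x)

lemma vecLpNorm_nonneg {p : ℝ} {m : ℕ} (v : Fin m → ℝ) : 0 ≤ vecLpNorm p v :=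
  Real.rpow_nonneg (Finset.sum_nonneg fun i _ => Real.rpow_nonneg (abs_nonneg _) _) _

lemma sum_rpow_le_rpow_sum' {ι : Type*} [Fintype ι] (f : ι → ℝ) (hf : ∀ i, 0 ≤ f i)
    {r : ℝ} (hr : 1 ≤ r) : ∑ i, f i ^ r ≤ (∑ i, f i) ^ r := by
  have hr0 : 0 < r := lt_of_lt_of_le one_pos hr
  have hS0 : 0 ≤ ∑ i, f i := Finset.sum_nonneg fun i _ => hf i
  rcases eq_or_lt_of_le hS0 with h0 | h0
  · have hall : ∀ i ∈ Finset.univ, f i = 0 :=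
      (Finset.sum_eq_zero_iff_of_nonneg (fun i _ => hf i)).mp h0.symm
    have : ∑ i, f i ^ r = 0 := Finset.sum_eq_zero fun i hi => by
      rw [hall i hi, Real.zero_rpow hr0.ne']
    rw [this, ← h0, Real.zero_rpow hr0.ne']
  · calc ∑ i, f i ^ r ≤ ∑ i, (∑ j, f j) ^ (r - 1) * f i := by
          refine Finset.sum_le_sum fun i _ => ?_
          rcases eq_or_lt_of_le (hf i) with hfi | hfi
          · rw [← hfi, Real.zero_rpow hr0.ne', mul_zero]
          · have h1 : f i ≤ ∑ j, f j := Finset.single_le_sum (fun j _ => hf j) (Finset.mem_univ i)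
            have h2 : f i ^ (r - 1) ≤ (∑ j, f j) ^ (r - 1) :=
              Real.rpow_le_rpow (hf i) h1 (by linarith)
            calc f i ^ r = f i ^ (r - 1) * f i := by
                  rw [← Real.rpow_add_one hfi.ne' (r - 1), sub_add_cancel]
              _ ≤ (∑ j, f j) ^ (r - 1) * f i := mul_le_mul_of_nonneg_right h2 (hf i)
      _ = (∑ j, f j) ^ (r - 1) * ∑ i, f i := by rw [← Finset.mul_sum]
      _ = (∑ i, f i) ^ r := by rw [← Real.rpow_add_one h0.ne' (r - 1), sub_add_cancel]

lemma vecLpNorm_anti {m : ℕ} (v : Fin m → ℝ) {a b : ℝ} (ha : 0 < a) (hab : a ≤ b) :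
    vecLpNorm b v ≤ vecLpNorm a v := by
  have hb : 0 < b := lt_of_lt_of_le ha hab
  have hnn : 0 ≤ ∑ i, |v i| ^ a := Finset.sum_nonneg fun i _ => Real.rpow_nonneg (abs_nonneg _) _
  have key : ∑ i, |v i| ^ b ≤ (∑ i, |v i| ^ a) ^ (b / a) := by
    have h := sum_rpow_le_rpow_sum' (fun i => |v i| ^ a)
      (fun i => Real.rpow_nonneg (abs_nonneg _) a) ((one_le_div ha).mpr hab)
    calc ∑ i, |v i| ^ b = ∑ i, (|v i| ^ a) ^ (b / a) := by
          refine Finset.sum_congr rfl fun i _ => ?_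
          rw [← Real.rpow_mul (abs_nonneg _), mul_div_cancel₀ _ ha.ne']
      _ ≤ _ := h
  unfold vecLpNorm
  calc (∑ i, |v i| ^ b) ^ (1 / b)
      ≤ ((∑ i, |v i| ^ a) ^ (b / a)) ^ (1 / b) :=
        Real.rpow_le_rpow (Finset.sum_nonneg fun i _ => Real.rpow_nonneg (abs_nonneg _) _)
          key (by positivity)
    _ = (∑ i, |v i| ^ a) ^ (1 / a) := by
        rw [← Real.rpow_mul hnn]
        congr 1
        field_simp

lemma vecLpNorm_le_holder {m : ℕ} (v : Fin m → ℝ) {a b : ℝ} (ha : 0 < a) (hab : a < b) :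
    vecLpNorm a v ≤ (m : ℝ) ^ (1/a - 1/b) * vecLpNorm b v := by
  have hb : 0 < b := ha.trans hab
  have hP : Real.HolderConjugate (b / a) (b / (b - a)) := by
    constructor
    · rw [inv_div, inv_div, inv_one, ← add_div]
      exact (div_eq_one_iff_eq hb.ne').mpr (by ring)
    · exact div_pos hb ha
    · exact div_pos hb (by linarith)
  have H := Real.inner_le_Lp_mul_Lq_of_nonneg (Finset.univ (α := Fin m)) hP
      (f := fun i => |v i| ^ a) (g := fun _ => 1)
      (fun i _ => Real.rpow_nonneg (abs_nonneg _) _) (fun i _ => zero_le_one)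
  simp only [mul_one, Real.one_rpow, Finset.sum_const, Finset.card_univ, Fintype.card_fin,
    nsmul_eq_mul] at H
  have hb1 : ∑ i, (|v i| ^ a) ^ (b / a) = ∑ i, |v i| ^ b := by
    refine Finset.sum_congr rfl fun i _ => ?_
    rw [← Real.rpow_mul (abs_nonneg _)]
    congr 1
    field_simp
  rw [hb1] at H
  have hnb : 0 ≤ ∑ i, |v i| ^ b := Finset.sum_nonneg fun i _ => Real.rpow_nonneg (abs_nonneg _) _
  have key : ∑ i, |v i| ^ a ≤ (∑ i, |v i| ^ b) ^ (1 / (b/a)) * (m : ℝ) ^ (1 / (b/(b-a))) := H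
  unfold vecLpNorm
  calc (∑ i, |v i| ^ a) ^ (1 / a)
      ≤ ((∑ i, |v i| ^ b) ^ (1 / (b/a)) * (m : ℝ) ^ (1 / (b/(b-a)))) ^ (1 / a) :=
        Real.rpow_le_rpow (Finset.sum_nonneg fun i _ => Real.rpow_nonneg (abs_nonneg _) _)
          key (by positivity)
    _ = (m : ℝ) ^ (1/a - 1/b) * (∑ i, |v i| ^ b) ^ (1 / b) := by
        have h1ne : b - a ≠ 0 := sub_ne_zero.mpr hab.ne'
        have ha' : a ≠ 0 := ha.ne'
        have hb' : b ≠ 0 := hb.ne'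
        have f1 : 1/(b/(b-a)) * (1/a) = 1/a - 1/b := by
          rw [one_div_div, div_mul_div_comm, mul_one, div_sub_div 1 1 ha' hb', mul_comm b a]
          congr 1
          ring
        have f2 : 1/(b/a) * (1/a) = 1/b := by
          rw [one_div_div]
          field_simp
        rw [Real.mul_rpow (Real.rpow_nonneg hnb _) (Real.rpow_nonneg (Nat.cast_nonneg m) _),
          ← Real.rpow_mul hnb, ← Real.rpow_mul (Nat.cast_nonneg m), f1, f2, mul_comm]

lemma lp_le_l2 {m : ℕ} (v : Fin m → ℝ) {p : ℝ} (hp : 1 ≤ p) :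
    vecLpNorm p v ≤ (m : ℝ) ^ (max 0 (1/p - 1/2)) * vecLpNorm 2 v := by
  have hp0 : 0 < p := lt_of_lt_of_le one_pos hp
  rcases lt_or_ge p 2 with h | h
  · have hmax : max 0 (1/p - 1/2) = 1/p - 1/2 := by
      refine max_eq_right ?_
      rw [sub_nonneg]
      exact one_div_le_one_div_of_le hp0 h.le
    rw [hmax]
    exact vecLpNorm_le_holder v hp0 h
  · have hmax : max 0 (1/p - 1/2) = 0 := by
      refine max_eq_left ?_
      rw [sub_nonpos]
      exact one_div_le_one_div_of_le two_pos h
    rw [hmax, Real.rpow_zero, one_mul]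
    exact vecLpNorm_anti v two_pos h

lemma l2_le_lp {m : ℕ} (v : Fin m → ℝ) {p : ℝ} (hp : 1 ≤ p) :
    vecLpNorm 2 v ≤ (m : ℝ) ^ (max 0 (1/2 - 1/p)) * vecLpNorm p v := by
  have hp0 : 0 < p := lt_of_lt_of_le one_pos hp
  rcases le_or_gt p 2 with h | h
  · have hmax : max 0 (1/2 - 1/p) = 0 := by
      refine max_eq_left ?_
      rw [sub_nonpos]
      exact one_div_le_one_div_of_le hp0 h
    rw [hmax, Real.rpow_zero, one_mul]
    exact vecLpNorm_anti v hp0 h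
  · have hmax : max 0 (1/2 - 1/p) = 1/2 - 1/p := by
      refine max_eq_right ?_
      rw [sub_nonneg]
      exact one_div_le_one_div_of_le two_pos h.le
    rw [hmax]
    have := vecLpNorm_le_holder v two_pos h
    have he : 1/2 - 1/p = (1/2 - 1/p : ℝ) := rfl
    simpa using this

lemma dual_le_l2 {m : ℕ} (x : Fin m → ℝ) {p : ℝ} (hp : 1 ≤ p) :
    vecDualNorm p x ≤ (m : ℝ) ^ (max 0 (1/2 - 1/p)) * vecLpNorm 2 x := by
  have h2nn : (0:ℝ) ≤ vecLpNorm 2 x := vecLpNorm_nonneg x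
  rcases eq_or_lt_of_le hp with h1 | h1
  · -- p = 1
    rw [vecDualNorm, if_pos h1.symm]
    have hmax : max 0 (1/2 - 1/p) = 0 := by
      rw [← h1]; norm_num
    rw [hmax, Real.rpow_zero, one_mul]
    rcases Nat.eq_zero_or_pos m with hm | hm
    · subst hm
      rw [Real.iSup_of_isEmpty]
      exact h2nn
    · have : Nonempty (Fin m) := ⟨⟨0, hm⟩⟩
      refine ciSup_le fun i => ?_
      have h1' : |x i| = (|x i| ^ (2:ℝ)) ^ (1/2 : ℝ) := by
        rw [← Real.rpow_mul (abs_nonneg _)]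
        norm_num
      rw [vecLpNorm, h1']
      refine Real.rpow_le_rpow (Real.rpow_nonneg (abs_nonneg _) _) ?_ (by norm_num)
      exact Finset.single_le_sum (f := fun j => |x j| ^ (2:ℝ))
        (fun j _ => Real.rpow_nonneg (abs_nonneg _) _) (Finset.mem_univ i)
  · -- p > 1
    rw [vecDualNorm, if_neg (show p ≠ 1 from fun hh => absurd (hh ▸ h1) (lt_irrefl 1))]
    have hp1 : 0 < p - 1 := by linarith
    have hq0 : 0 < p / (p - 1) := div_pos (by linarith) hp1
    rcases le_or_gt p 2 with h | h
    · have hq2 : 2 ≤ p / (p - 1) := by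
        rw [le_div_iff₀ hp1]; linarith
      have hmax : max 0 (1/2 - 1/p) = 0 := by
        refine max_eq_left ?_
        rw [sub_nonpos]
        exact one_div_le_one_div_of_le (by linarith) h
      rw [hmax, Real.rpow_zero, one_mul]
      exact vecLpNorm_anti x two_pos hq2
    · have hq2 : p / (p - 1) < 2 := by
        rw [div_lt_iff₀ hp1]; linarith
      have := vecLpNorm_le_holder x hq0 hq2
      have he : 1 / (p / (p-1)) - 1/2 = 1/2 - 1/p := by
        rw [one_div_div]
        field_simp
        ring
      have hmax : max 0 (1/2 - 1/p) = 1/2 - 1/p := by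
        refine max_eq_right ?_
        rw [sub_nonneg]
        exact one_div_le_one_div_of_le two_pos h.le
      rw [hmax, ← he]
      exact this

lemma l2_mulVec_orth {s d : ℕ} (Q : Matrix (Fin s) (Fin d) ℝ) (hQ : Qᵀ * Q = 1)
    (x : Fin d → ℝ) : vecLpNorm 2 (Q *ᵥ x) = vecLpNorm 2 x := by
  have habs : ∀ (k : ℕ) (v : Fin k → ℝ), ∑ i, |v i| ^ (2:ℝ) = v ⬝ᵥ v := by
    intro k v
    rw [dotProduct]
    refine Finset.sum_congr rfl fun i _ => ?_
    rw [show (2:ℝ) = ((2:ℕ):ℝ) by norm_num, Real.rpow_natCast, sq_abs, pow_two]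
  unfold vecLpNorm
  rw [habs, habs]
  congr 1
  calc (Q *ᵥ x) ⬝ᵥ (Q *ᵥ x) = ((Q *ᵥ x) ᵥ* Q) ⬝ᵥ x := Matrix.dotProduct_mulVec _ _ _
    _ = (Qᵀ *ᵥ (Q *ᵥ x)) ⬝ᵥ x := by rw [Matrix.mulVec_transpose]
    _ = ((Qᵀ * Q) *ᵥ x) ⬝ᵥ x := by rw [Matrix.mulVec_mulVec]
    _ = x ⬝ᵥ x := by rw [hQ, Matrix.one_mulVec]

lemma matNorm_le_of_cols {n d : ℕ} (U : Matrix (Fin n) (Fin d) ℝ) {p C : ℝ} (hp : 0 < p)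
    (hC : 0 ≤ C) (h : ∀ j, vecLpNorm p (fun i => U i j) ≤ C) :
    matEntryLpNorm p U ≤ (d : ℝ) ^ (1/p) * C := by
  have hterm : ∀ j, ∑ i, |U i j| ^ p ≤ C ^ p := by
    intro j
    have hnn : 0 ≤ ∑ i, |U i j| ^ p :=
      Finset.sum_nonneg fun i _ => Real.rpow_nonneg (abs_nonneg _) _
    have h2 : ((∑ i, |U i j| ^ p) ^ (1/p : ℝ)) ≤ C := h j
    have h3 := Real.rpow_le_rpow (Real.rpow_nonneg hnn _) h2 hp.le
    rwa [← Real.rpow_mul hnn, one_div_mul_cancel hp.ne', Real.rpow_one] at h3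
  have hsum : ∑ i, ∑ j, |U i j| ^ p ≤ (d : ℝ) * C ^ p := by
    rw [Finset.sum_comm]
    calc ∑ j, ∑ i, |U i j| ^ p ≤ ∑ _j : Fin d, C ^ p := Finset.sum_le_sum fun j _ => hterm j
      _ = (d : ℝ) * C ^ p := by
          rw [Finset.sum_const, Finset.card_univ, Fintype.card_fin, nsmul_eq_mul]
  unfold matEntryLpNorm
  have hnn2 : 0 ≤ ∑ i, ∑ j, |U i j| ^ p :=
    Finset.sum_nonneg fun i _ => Finset.sum_nonneg fun j _ => Real.rpow_nonneg (abs_nonneg _) _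
  calc (∑ i, ∑ j, |U i j| ^ p) ^ (1/p)
      ≤ ((d : ℝ) * C ^ p) ^ (1/p) := Real.rpow_le_rpow hnn2 hsum (by positivity)
    _ = (d : ℝ) ^ (1/p) * C := by
        rw [Real.mul_rpow (Nat.cast_nonneg d) (Real.rpow_nonneg hC _),
          ← Real.rpow_mul hC, mul_one_div_cancel hp.ne', Real.rpow_one]

theorem preconditioning_quality
    (n d s : ℕ) (p : ℝ) (hp : 1 ≤ p)
    (A : Matrix (Fin n) (Fin d) ℝ) (hrank : A.rank = d)
    (S : Matrix (Fin s) (Fin n) ℝ) (σS κS : ℝ) (hσ : 0 < σS) (hκ : 1 ≤ κS)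
    (hsketch : ∀ x : Fin d → ℝ,
      σS * vecLpNorm p (A *ᵥ x) ≤ vecLpNorm p ((S * A) *ᵥ x) ∧
      vecLpNorm p ((S * A) *ᵥ x) ≤ κS * σS * vecLpNorm p (A *ᵥ x))
    (Q : Matrix (Fin s) (Fin d) ℝ) (R : Matrix (Fin d) (Fin d) ℝ)
    (hQR : S * A = Q * R) (hQ : Qᵀ * Q = 1) (hR : IsUnit R) :
    ∃ α β : ℝ, IsConditioned p α β (A * R⁻¹) ∧
      α * β ≤ κS * (d : ℝ) ^ (max (1/2 : ℝ) (1/p)) * (s : ℝ) ^ |1/p - 1/2| := by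
  have hp0 : 0 < p := lt_of_lt_of_le one_pos hp
  have hRHSnn : (0:ℝ) ≤ κS * (d : ℝ) ^ (max (1/2 : ℝ) (1/p)) * (s : ℝ) ^ |1/p - 1/2| :=
    mul_nonneg (mul_nonneg (by linarith) (Real.rpow_nonneg (Nat.cast_nonneg _) _))
      (Real.rpow_nonneg (Nat.cast_nonneg _) _)
  rcases Nat.eq_zero_or_pos d with hd | hd
  · -- d = 0 : take α = β = 0
    subst hd
    refine ⟨0, 0, ⟨le_refl 0, ?_, ?_⟩, by rw [zero_mul]; exact hRHSnn⟩
    · unfold matEntryLpNorm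
      refine le_of_eq ?_
      simp only [Finset.univ_eq_empty, Finset.sum_empty, Finset.sum_const_zero]
      exact Real.zero_rpow (one_div_ne_zero hp0.ne')
    · intro x
      rw [zero_mul]
      by_cases h1 : p = 1
      · rw [vecDualNorm, if_pos h1]
        exact le_of_eq (Real.iSup_of_isEmpty _)
      · have hp1 : 1 < p := lt_of_le_of_ne hp (Ne.symm h1)
        have hq : p / (p - 1) ≠ 0 := ne_of_gt (div_pos (by linarith) (by linarith))
        rw [vecDualNorm, if_neg h1, vecLpNorm]
        refine le_of_eq ?_
        simp only [Finset.univ_eq_empty, Finset.sum_empty]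
        exact Real.zero_rpow (one_div_ne_zero hq)
  rcases Nat.eq_zero_or_pos s with hs | hs
  · -- s = 0 but d > 0 : contradiction from Qᵀ * Q = 1
    exfalso
    subst hs
    have h0 : (Qᵀ * Q) ⟨0, hd⟩ ⟨0, hd⟩ = 0 := by
      simp [Matrix.mul_apply]
    rw [hQ, Matrix.one_apply_eq] at h0
    exact one_ne_zero h0
  -- main case
  have hdR : (0:ℝ) < d := by exact_mod_cast hd
  have hsR : (0:ℝ) < s := by exact_mod_cast hs
  set U := A * R⁻¹ with hUdef
  have hdet : IsUnit R.det := (Matrix.isUnit_iff_isUnit_det R).mp hR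
  have hU : S * U = Q := by
    rw [hUdef, ← Matrix.mul_assoc, hQR, Matrix.mul_assoc, Matrix.mul_nonsing_inv R hdet,
      Matrix.mul_one]
  have hSAR : S * A * R⁻¹ = Q := by
    rw [Matrix.mul_assoc]
    exact hU
  have hkey : ∀ x : Fin d → ℝ,
      σS * vecLpNorm p (U *ᵥ x) ≤ vecLpNorm p (Q *ᵥ x) ∧
      vecLpNorm p (Q *ᵥ x) ≤ κS * σS * vecLpNorm p (U *ᵥ x) := by
    intro x
    have h := hsketch (R⁻¹ *ᵥ x)
    rw [Matrix.mulVec_mulVec, Matrix.mulVec_mulVec, hSAR] at h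
    exact h
  set E1 := max 0 (1/p - 1/2) with hE1
  set E2 := max 0 (1/2 - 1/p) with hE2
  have hE1nn : 0 ≤ E1 := le_max_left _ _
  have hE2nn : 0 ≤ E2 := le_max_left _ _
  refine ⟨(d:ℝ) ^ (1/p) * (s:ℝ) ^ E1 / σS, κS * σS * ((d:ℝ) ^ E2 * (s:ℝ) ^ E2), ⟨?_, ?_, ?_⟩, ?_⟩
  · exact mul_nonneg (mul_nonneg (by linarith) hσ.le)
      (mul_nonneg (Real.rpow_nonneg hdR.le _) (Real.rpow_nonneg hsR.le _))
  · -- matrix norm bound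
    have hcol : ∀ j, vecLpNorm p (fun i => U i j) ≤ (s:ℝ) ^ E1 / σS := by
      intro j
      have h1 := (hkey (Pi.single j (1:ℝ))).1
      have h2 : vecLpNorm p (Q *ᵥ Pi.single j (1:ℝ)) ≤
          (s:ℝ) ^ E1 * vecLpNorm 2 (Q *ᵥ Pi.single j (1:ℝ)) := lp_le_l2 _ hp
      have h3 : vecLpNorm 2 (Q *ᵥ Pi.single j (1:ℝ)) = 1 := by
        rw [l2_mulVec_orth Q hQ]
        unfold vecLpNorm
        have hsum : ∑ i, |(Pi.single j (1:ℝ) : Fin d → ℝ) i| ^ (2:ℝ) = 1 := by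
          rw [Finset.sum_eq_single j]
          · simp
          · intro i _ hij
            rw [Pi.single_eq_of_ne hij, abs_zero, Real.zero_rpow (by norm_num : (2:ℝ) ≠ 0)]
          · intro hj; exact absurd (Finset.mem_univ j) hj
        rw [hsum, Real.one_rpow]
      have hcolU : U *ᵥ Pi.single j (1:ℝ) = fun i => U i j := by
        funext i
        simp [Matrix.mulVec_single]
      rw [hcolU] at h1
      rw [h3, mul_one] at h2
      have := le_trans h1 h2
      rw [le_div_iff₀ hσ, mul_comm]
      exact this
    have hmain := matNorm_le_of_cols U hp0
      (div_nonneg (Real.rpow_nonneg hsR.le _) hσ.le) hcol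
    calc matEntryLpNorm p U ≤ (d:ℝ) ^ (1/p) * ((s:ℝ) ^ E1 / σS) := hmain
      _ = (d:ℝ) ^ (1/p) * (s:ℝ) ^ E1 / σS := by rw [mul_div_assoc]
  · -- dual norm bound
    intro x
    have h1 := dual_le_l2 x hp
    have h2 : vecLpNorm 2 x = vecLpNorm 2 (Q *ᵥ x) := (l2_mulVec_orth Q hQ x).symm
    have h3 := l2_le_lp (Q *ᵥ x) hp
    have h4 := (hkey x).2
    have hdnn : (0:ℝ) ≤ (d:ℝ) ^ E2 := Real.rpow_nonneg hdR.le _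
    have hsnn : (0:ℝ) ≤ (s:ℝ) ^ E2 := Real.rpow_nonneg hsR.le _
    calc vecDualNorm p x ≤ (d:ℝ) ^ E2 * vecLpNorm 2 x := h1
      _ = (d:ℝ) ^ E2 * vecLpNorm 2 (Q *ᵥ x) := by rw [h2]
      _ ≤ (d:ℝ) ^ E2 * ((s:ℝ) ^ E2 * vecLpNorm p (Q *ᵥ x)) :=
          mul_le_mul_of_nonneg_left h3 hdnn
      _ ≤ (d:ℝ) ^ E2 * ((s:ℝ) ^ E2 * (κS * σS * vecLpNorm p (U *ᵥ x))) :=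
          mul_le_mul_of_nonneg_left (mul_le_mul_of_nonneg_left h4 hsnn) hdnn
      _ = κS * σS * ((d:ℝ) ^ E2 * (s:ℝ) ^ E2) * vecLpNorm p (U *ᵥ x) := by ring
  · -- product bound
    have key : (d:ℝ) ^ (1/p) * (s:ℝ) ^ E1 / σS * (κS * σS * ((d:ℝ) ^ E2 * (s:ℝ) ^ E2))
        = κS * ((d:ℝ) ^ (1/p) * (d:ℝ) ^ E2) * ((s:ℝ) ^ E1 * (s:ℝ) ^ E2) := by
      field_simp
    rw [key, ← Real.rpow_add hdR, ← Real.rpow_add hsR]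
    have hd2 : 1/p + E2 = max (1/2 : ℝ) (1/p) := by
      rcases le_total (1/p : ℝ) (1/2) with h | h
      · rw [hE2, max_eq_right (by linarith : (0:ℝ) ≤ 1/2 - 1/p),
          max_eq_left h]
        ring
      · rw [hE2, max_eq_left (by linarith : 1/2 - 1/p ≤ (0:ℝ)),
          max_eq_right h]
        ring
    have hs2 : E1 + E2 = |1/p - 1/2| := by
      rcases le_total (1/p : ℝ) (1/2) with h | h
      · rw [hE1, hE2, max_eq_left (by linarith : 1/p - 1/2 ≤ (0:ℝ)),
          max_eq_right (by linarith : (0:ℝ) ≤ 1/2 - 1/p),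
          abs_of_nonpos (by linarith : 1/p - 1/2 ≤ (0:ℝ))]
        ring
      · rw [hE1, hE2, max_eq_right (by linarith : (0:ℝ) ≤ 1/p - 1/2),
          max_eq_left (by linarith : 1/2 - 1/p ≤ (0:ℝ)),
          abs_of_nonneg (by linarith : (0:ℝ) ≤ 1/p - 1/2)]
        ring
    rw [hd2, hs2]
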